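/- Let b be real with |1+2b| ≤ 1 and define f₂(z) = z(1 + 2(1+2b)z + z²)/((1+z)²(1-z²)) on the open unit disk D. Then for all z ∈ D \ {0}, Re((1+z)²f₂(z)/z) > 0. -/

import Mathlib

theorem f2_in_class (b : ℝ) (hb : |1 + 2 * b| ≤ 1)
    (f₂ : ℂ → ℂ)
    (hf : ∀ z, f₂ z = z * (1 + 2 * (1 + 2 * b) * z + z ^ 2) / ((1 + z) ^ 2 * (1 - z ^ 2))) :
    ∀ z ∈ Metric.ball (0 : ℂ) 1, z ≠ 0 → 0 < ((1 + z) ^ 2 * f₂ z / z).re := by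
  intro z hz hz0
  rw [mem_ball_zero_iff] at hz
  have hns : Complex.normSq z < 1 := by
    rw [Complex.normSq_eq_norm_sq]
    nlinarith [norm_nonneg z]
  set x := z.re with hx
  set y := z.im with hy
  have hns' : x ^ 2 + y ^ 2 < 1 := by
    simpa [Complex.normSq_apply, sq] using hns
  have h1z : (1 : ℂ) + z ≠ 0 := by
    intro h
    have hzm : z = -1 := by linear_combination h
    rw [hzm] at hns
    simp at hns
  have h1z2 : (1 : ℂ) - z ^ 2 ≠ 0 := by
    intro h
    have hz2 : z ^ 2 = 1 := by linear_combination -h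
    have : Complex.normSq (z ^ 2) = 1 := by rw [hz2]; simp
    rw [map_pow] at this
    nlinarith [Complex.normSq_nonneg z]
  set c : ℝ := 1 + 2 * b with hc
  have hc2 : c ^ 2 ≤ 1 := by
    have := abs_le.mp hb
    nlinarith [this.1, this.2]
  have key : (1 + z) ^ 2 * f₂ z / z = (1 + 2 * (c : ℂ) * z + z ^ 2) / (1 - z ^ 2) := by
    rw [hf]
    field_simp
    push_cast [hc]
    ring
  rw [key, Complex.div_re, ← add_div]
  apply div_pos
  · have hre : ((1 : ℂ) + 2 * (c : ℂ) * z + z ^ 2).re = 1 + 2 * c * x + (x ^ 2 - y ^ 2) := by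
      simp [Complex.add_re, Complex.mul_re, Complex.ofReal_re, Complex.ofReal_im, sq]
      rw [← hx, ← hy]
    have him : ((1 : ℂ) + 2 * (c : ℂ) * z + z ^ 2).im = 2 * c * y + 2 * x * y := by
      simp [Complex.add_im, Complex.mul_im, Complex.ofReal_re, Complex.ofReal_im, sq]
      rw [← hx, ← hy]; ring
    have hre2 : ((1 : ℂ) - z ^ 2).re = 1 - (x ^ 2 - y ^ 2) := by
      simp [Complex.sub_re, sq, Complex.mul_re]
      rw [← hx, ← hy]
    have him2 : ((1 : ℂ) - z ^ 2).im = -(2 * x * y) := by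
      simp [Complex.sub_im, sq, Complex.mul_im]
      ring
    rw [hre, him, hre2, him2]
    have h1 : 0 < 1 - (x ^ 2 + y ^ 2) := by linarith
    have h2 : 0 < 1 + (x ^ 2 + y ^ 2) + 2 * c * x := by
      nlinarith [sq_nonneg (x + c), sq_nonneg y]
    nlinarith [mul_pos h1 h2]
  · exact Complex.normSq_pos.mpr h1z2
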